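/- The interval system 𝐀x + 𝐁∀y ≤ 𝐛, x ≥ 0 (with 𝐀 = 𝐀∀ + 𝐀∃, the matrix 𝐁 = 𝐁∀ entirely universally quantified, and 𝐛 = 𝐛∀ + 𝐛∃) is AE solvable—meaning for every realization A∀ ∈ 𝐀∀, B∀ ∈ 𝐁∀, b∀ ∈ 𝐛∀ there exist A∃ ∈ 𝐀∃, b∃ ∈ 𝐛∃ such that (A∀+A∃)x + B∀y ≤ b∀+b∃, x ≥ 0 has a solution—if and only if the system has an AE solution (a fixed (x,y) working for all ∀-realizations with appropriate ∃-realizations). -/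

import Mathlib

open Matrix Finset

lemma farkas_fin_aux : ∀ (k : ℕ) {m : ℕ} (v : Fin k → (Fin m → ℝ)) (b : Fin m → ℝ),
    (∃ lam : Fin k → ℝ, (∀ i, 0 ≤ lam i) ∧ b = ∑ i, lam i • v i) ∨
    (∃ p : Fin m → ℝ, (∀ i, 0 ≤ p ⬝ᵥ v i) ∧ p ⬝ᵥ b < 0) := by
  intro k
  induction k with
  | zero =>
    intro m v b
    by_cases hb : b = 0
    · exact Or.inl ⟨0, fun i => le_rfl, by simp [hb]⟩
    · refine Or.inr ⟨-b, fun i => i.elim0, ?_⟩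
      have h2 : 0 < b ⬝ᵥ b := by
        obtain ⟨i, hi⟩ := Function.ne_iff.mp hb
        exact Finset.sum_pos' (fun i _ => mul_self_nonneg _)
          ⟨i, Finset.mem_univ i, mul_self_pos.mpr hi⟩
      have h1 : (-b) ⬝ᵥ b = -(b ⬝ᵥ b) := by rw [neg_dotProduct]
      rw [h1]; linarith
  | succ k IH =>
    intro m v b
    rcases IH (fun i => v i.castSucc) b with ⟨lam, hl, hb⟩ | ⟨p, hp, hpb⟩
    · refine Or.inl ⟨Fin.snoc lam 0, ?_, ?_⟩
      · intro i
        refine Fin.lastCases ?_ ?_ i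
        · simp
        · intro j; simpa using hl j
      · rw [Fin.sum_univ_castSucc]
        simpa using hb
    · by_cases hα : 0 ≤ p ⬝ᵥ v (Fin.last k)
      · refine Or.inr ⟨p, ?_, hpb⟩
        intro i
        refine Fin.lastCases hα (fun j => hp j) i
      · push_neg at hα
        set w := v (Fin.last k) with hw
        set α := p ⬝ᵥ w with hαdef
        have hαne : α ≠ 0 := ne_of_lt hα
        set v' : Fin k → Fin m → ℝ :=
          fun i => v i.castSucc - ((p ⬝ᵥ v i.castSucc) / α) • w with hv'
        set b' : Fin m → ℝ := b - ((p ⬝ᵥ b) / α) • w with hb'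
        rcases IH v' b' with ⟨lam, hl, hsum⟩ | ⟨q, hq, hqb⟩
        · -- reconstruct a nonneg combination for b
          set c : ℝ := ∑ i, lam i * (p ⬝ᵥ v i.castSucc) with hc
          have hcnn : 0 ≤ c :=
            Finset.sum_nonneg fun i _ => mul_nonneg (hl i) (hp i)
          set μ : ℝ := (p ⬝ᵥ b - c) / α with hμ
          have hμnn : 0 ≤ μ := by
            rw [hμ, div_nonneg_iff]
            right
            constructor <;> linarith
          have hsum2 : ∑ i, lam i • v' i
              = (∑ i, lam i • v i.castSucc) - (c / α) • w := by
            rw [hv']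
            simp only [smul_sub, Finset.sum_sub_distrib, smul_smul]
            congr 1
            rw [← Finset.sum_smul]
            congr 1
            rw [hc, Finset.sum_div]
            congr 1
            funext i
            ring
          have hbeq : b = (∑ i, lam i • v i.castSucc) + μ • w := by
            have : b = (∑ i, lam i • v' i) + ((p ⬝ᵥ b) / α) • w := by
              rw [← hsum, hb']; abel
            rw [this, hsum2, hμ, sub_div, sub_smul]
            abel
          refine Or.inl ⟨Fin.snoc lam μ, ?_, ?_⟩
          · intro i
            refine Fin.lastCases ?_ ?_ i
            · simpa using hμnn
            · intro j; simpa using hl j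
          · rw [Fin.sum_univ_castSucc]
            simpa using hbeq
        · -- build new separating functional
          set r : Fin m → ℝ := q - ((q ⬝ᵥ w) / α) • p with hr
          have hrdot : ∀ u : Fin m → ℝ, r ⬝ᵥ u = q ⬝ᵥ u - ((q ⬝ᵥ w) / α) * (p ⬝ᵥ u) := by
            intro u
            rw [hr, sub_dotProduct, smul_dotProduct, smul_eq_mul]
          refine Or.inr ⟨r, ?_, ?_⟩
          · intro i
            refine Fin.lastCases ?_ ?_ i
            · rw [hrdot, ← hw, ← hαdef, div_mul_cancel₀ _ hαne]
              simp
            · intro j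
              have := hq j
              rw [hv', dotProduct_sub, dotProduct_smul, smul_eq_mul] at this
              rw [hrdot]
              have heq : q ⬝ᵥ w / α * (p ⬝ᵥ v j.castSucc)
                  = p ⬝ᵥ v j.castSucc / α * (q ⬝ᵥ w) := by ring
              linarith
          · have := hqb
            rw [hb', dotProduct_sub, dotProduct_smul, smul_eq_mul] at this
            rw [hrdot]
            have heq : q ⬝ᵥ w / α * (p ⬝ᵥ b) = p ⬝ᵥ b / α * (q ⬝ᵥ w) := by ring
            linarith

lemma farkas_cone {m : ℕ} {κ : Type*} [Fintype κ] (v : κ → Fin m → ℝ) (b : Fin m → ℝ) :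
    (∃ lam : κ → ℝ, (∀ i, 0 ≤ lam i) ∧ b = ∑ i, lam i • v i) ∨
    (∃ p : Fin m → ℝ, (∀ i, 0 ≤ p ⬝ᵥ v i) ∧ p ⬝ᵥ b < 0) := by
  obtain ⟨e⟩ : Nonempty (Fin (Fintype.card κ) ≃ κ) := ⟨(Fintype.equivFin κ).symm⟩
  rcases farkas_fin_aux (Fintype.card κ) (fun i => v (e i)) b with ⟨lam, hl, hb⟩ | ⟨p, hp, hpb⟩
  · refine Or.inl ⟨fun j => lam (e.symm j), fun j => hl _, ?_⟩
    rw [hb, ← e.sum_comp (fun j => lam (e.symm j) • v j)]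
    simp
  · exact Or.inr ⟨p, fun j => by simpa using hp (e.symm j), hpb⟩


/-- The interval system `𝐀x + 𝐁∀y ≤ 𝐛, x ≥ 0` (with `𝐁` entirely universally
quantified) is AE solvable if and only if it has an AE solution. -/
theorem ae_solvable_iff_ae_solution_B_forall {m n n' : ℕ}
    (Afc AfΔ Aec AeΔ : Matrix (Fin m) (Fin n) ℝ)
    (Bfc BfΔ : Matrix (Fin m) (Fin n') ℝ)
    (bfc bfΔ bec beΔ : Fin m → ℝ)
    (hAfΔ : ∀ i j, 0 ≤ AfΔ i j) (hAeΔ : ∀ i j, 0 ≤ AeΔ i j)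
    (hBfΔ : ∀ i j, 0 ≤ BfΔ i j)
    (hbfΔ : ∀ i, 0 ≤ bfΔ i) (hbeΔ : ∀ i, 0 ≤ beΔ i) :
    (∀ Af : Matrix (Fin m) (Fin n) ℝ, (∀ i j, |Af i j - Afc i j| ≤ AfΔ i j) →
     ∀ Bf : Matrix (Fin m) (Fin n') ℝ, (∀ i j, |Bf i j - Bfc i j| ≤ BfΔ i j) →
     ∀ bf : Fin m → ℝ, (∀ i, |bf i - bfc i| ≤ bfΔ i) →
      ∃ Ae : Matrix (Fin m) (Fin n) ℝ, (∀ i j, |Ae i j - Aec i j| ≤ AeΔ i j) ∧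
      ∃ be : Fin m → ℝ, (∀ i, |be i - bec i| ≤ beΔ i) ∧
      ∃ (x : Fin n → ℝ) (y : Fin n' → ℝ),
        (∀ i, ((Af + Ae).mulVec x) i + (Bf.mulVec y) i ≤ bf i + be i) ∧
        (∀ j, 0 ≤ x j))
    ↔
    (∃ (x : Fin n → ℝ) (y : Fin n' → ℝ),
      ∀ Af : Matrix (Fin m) (Fin n) ℝ, (∀ i j, |Af i j - Afc i j| ≤ AfΔ i j) →
      ∀ Bf : Matrix (Fin m) (Fin n') ℝ, (∀ i j, |Bf i j - Bfc i j| ≤ BfΔ i j) →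
      ∀ bf : Fin m → ℝ, (∀ i, |bf i - bfc i| ≤ bfΔ i) →
        ∃ Ae : Matrix (Fin m) (Fin n) ℝ, (∀ i j, |Ae i j - Aec i j| ≤ AeΔ i j) ∧
        ∃ be : Fin m → ℝ, (∀ i, |be i - bec i| ≤ beΔ i) ∧
          (∀ i, ((Af + Ae).mulVec x) i + (Bf.mulVec y) i ≤ bf i + be i) ∧
          (∀ j, 0 ≤ x j)) := by
  constructor
  · intro H
    -- the "worst-case" matrix and right-hand side
    obtain ⟨Astar, hAstar⟩ : ∃ Astar : Matrix (Fin m) (Fin n) ℝ,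
        Astar = fun i j => Afc i j + AfΔ i j + Aec i j - AeΔ i j := ⟨_, rfl⟩
    obtain ⟨bstar, hbstar⟩ : ∃ bstar : Fin m → ℝ,
        bstar = fun i => bfc i - bfΔ i + bec i + beΔ i := ⟨_, rfl⟩
    obtain ⟨V, hV⟩ : ∃ V : ((Fin n ⊕ (Fin n' ⊕ Fin n')) ⊕ Fin m) → Fin m → ℝ,
        V = Sum.elim (Sum.elim (fun j i => Astar i j)
          (Sum.elim (fun j i => Bfc i j + BfΔ i j) (fun j i => -Bfc i j + BfΔ i j)))
          (fun i0 => Pi.single i0 1) := ⟨_, rfl⟩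
    rcases farkas_cone V bstar with ⟨lam, hl, hb⟩ | ⟨p, hp, hpb⟩
    · -- worst-case system is solvable: extract the AE solution
      obtain ⟨x, hxdef⟩ : ∃ x : Fin n → ℝ, x = fun j => lam (Sum.inl (Sum.inl j)) := ⟨_, rfl⟩
      obtain ⟨u, hudef⟩ : ∃ u : Fin n' → ℝ,
          u = fun j => lam (Sum.inl (Sum.inr (Sum.inl j))) := ⟨_, rfl⟩
      obtain ⟨v2, hv2def⟩ : ∃ v2 : Fin n' → ℝ,
          v2 = fun j => lam (Sum.inl (Sum.inr (Sum.inr j))) := ⟨_, rfl⟩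
      have hxnn : ∀ j, 0 ≤ x j := by intro j; rw [hxdef]; exact hl _
      have hunn : ∀ j, 0 ≤ u j := by intro j; rw [hudef]; exact hl _
      have hvnn : ∀ j, 0 ≤ v2 j := by intro j; rw [hv2def]; exact hl _
      have hbi : ∀ i, bstar i = (∑ j, x j * Astar i j)
          + ((∑ j, u j * (Bfc i j + BfΔ i j))
          + (∑ j, v2 j * (-Bfc i j + BfΔ i j))) + lam (Sum.inr i) := by
        intro i
        have h := congrFun hb i
        simpa [hV, Finset.sum_apply, Fintype.sum_sum_type, Pi.single_apply, mul_ite,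
          hxdef, hudef, hv2def] using h
      obtain ⟨AeW, hAeW⟩ : ∃ AeW : Matrix (Fin m) (Fin n) ℝ,
          AeW = fun i j => Aec i j - AeΔ i j := ⟨_, rfl⟩
      obtain ⟨beW, hbeW⟩ : ∃ beW : Fin m → ℝ, beW = fun i => bec i + beΔ i := ⟨_, rfl⟩
      refine ⟨x, fun j => u j - v2 j, ?_⟩
      intro Af hAf Bf hBf bf hbf
      refine ⟨AeW, ?_, beW, ?_, ?_, fun j => hxnn j⟩
      · intro i j
        have heq : AeW i j - Aec i j = -(AeΔ i j) := by simp only [hAeW]; ring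
        rw [heq, abs_neg, abs_of_nonneg (hAeΔ i j)]
      · intro i
        have heq : beW i - bec i = beΔ i := by simp only [hbeW]; ring
        rw [heq, abs_of_nonneg (hbeΔ i)]
      · intro i
        have hmv : (((Af + AeW) : Matrix (Fin m) (Fin n) ℝ).mulVec x) i
            = ∑ j, (Af i j + AeW i j) * x j := by
          simp [Matrix.mulVec, dotProduct, Matrix.add_apply]
        have hmv2 : ((Bf.mulVec fun j => u j - v2 j)) i = ∑ j, Bf i j * (u j - v2 j) := by
          simp [Matrix.mulVec, dotProduct]
        rw [hmv, hmv2]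
        have h1 : ∑ j, (Af i j + AeW i j) * x j ≤ ∑ j, x j * Astar i j := by
          refine Finset.sum_le_sum fun j _ => ?_
          rw [mul_comm]
          refine mul_le_mul_of_nonneg_left ?_ (hxnn j)
          have h2 := (abs_le.mp (hAf i j)).2
          simp only [hAeW, hAstar]
          linarith
        have h2 : ∑ j, Bf i j * (u j - v2 j)
            ≤ (∑ j, u j * (Bfc i j + BfΔ i j)) + (∑ j, v2 j * (-Bfc i j + BfΔ i j)) := by
          rw [← Finset.sum_add_distrib]
          refine Finset.sum_le_sum fun j _ => ?_
          have hb1 := (abs_le.mp (hBf i j)).1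
          have hb2 := (abs_le.mp (hBf i j)).2
          have e1 : u j * Bf i j ≤ u j * (Bfc i j + BfΔ i j) :=
            mul_le_mul_of_nonneg_left (by linarith) (hunn j)
          have e2 : v2 j * (-Bf i j) ≤ v2 j * (-Bfc i j + BfΔ i j) :=
            mul_le_mul_of_nonneg_left (by linarith) (hvnn j)
          have e3 : Bf i j * (u j - v2 j) = u j * Bf i j + v2 j * (-Bf i j) := by ring
          linarith
        have h3 := hbi i
        have h4 : 0 ≤ lam (Sum.inr i) := hl _
        have h5 := (abs_le.mp (hbf i)).1
        have h6 : beW i = bec i + beΔ i := by simp only [hbeW]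
        have h7 : bstar i = bfc i - bfΔ i + bec i + beΔ i := by simp only [hbstar]
        rw [h7] at h3
        linarith
    · -- the Farkas certificate yields a scenario contradicting AE solvability
      exfalso
      have hpnn : ∀ i, 0 ≤ p i := by
        intro i
        have := hp (Sum.inr i)
        simpa [hV, dotProduct, Pi.single_apply, mul_ite] using this
      obtain ⟨c, hcdef⟩ : ∃ c : Fin n' → ℝ, c = fun j => ∑ i, p i * Bfc i j := ⟨_, rfl⟩
      obtain ⟨D, hDdef⟩ : ∃ D : Fin n' → ℝ, D = fun j => ∑ i, p i * BfΔ i j := ⟨_, rfl⟩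
      have hDnn : ∀ j, 0 ≤ D j := by
        intro j
        rw [hDdef]
        exact Finset.sum_nonneg fun i _ => mul_nonneg (hpnn i) (hBfΔ i j)
      have h1 : ∀ j, 0 ≤ c j + D j := by
        intro j
        have h := hp (Sum.inl (Sum.inr (Sum.inl j)))
        have e : p ⬝ᵥ V (Sum.inl (Sum.inr (Sum.inl j))) = c j + D j := by
          rw [hV, hcdef, hDdef]
          simp [dotProduct, mul_add, Finset.sum_add_distrib]
        rwa [e] at h
      have h2 : ∀ j, 0 ≤ -c j + D j := by
        intro j
        have h := hp (Sum.inl (Sum.inr (Sum.inr j)))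
        have e : p ⬝ᵥ V (Sum.inl (Sum.inr (Sum.inr j))) = -c j + D j := by
          rw [hV, hcdef, hDdef]
          simp [dotProduct, mul_add, mul_neg, Finset.sum_add_distrib, neg_add,
            Finset.sum_neg_distrib]
        rwa [e] at h
      have hcabs : ∀ j, |c j| ≤ D j := by
        intro j
        rw [abs_le]
        constructor
        · linarith [h1 j]
        · linarith [h2 j]
      obtain ⟨Bf, hBfdef⟩ : ∃ Bf : Matrix (Fin m) (Fin n') ℝ,
          Bf = fun i j => Bfc i j - (c j / D j) * BfΔ i j := ⟨_, rfl⟩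
      have hratio : ∀ j, |c j / D j| ≤ 1 := by
        intro j
        rcases (hDnn j).eq_or_lt with h | h
        · simp [← h]
        · rw [abs_div, abs_of_pos h]
          rw [div_le_one h]
          exact hcabs j
      have hBfmem : ∀ i j, |Bf i j - Bfc i j| ≤ BfΔ i j := by
        intro i j
        have heq : Bf i j - Bfc i j = -((c j / D j) * BfΔ i j) := by
          simp only [hBfdef]; ring
        rw [heq, abs_neg, abs_mul, abs_of_nonneg (hBfΔ i j)]
        calc |c j / D j| * BfΔ i j ≤ 1 * BfΔ i j :=
              mul_le_mul_of_nonneg_right (hratio j) (hBfΔ i j)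
          _ = BfΔ i j := one_mul _
      have hBcol : ∀ j, ∑ i, p i * Bf i j = 0 := by
        intro j
        have hstep : ∑ i, p i * Bf i j = c j - (c j / D j) * D j := by
          simp only [hBfdef, hDdef]
          rw [hcdef]
          simp only []
          rw [Finset.mul_sum, ← Finset.sum_sub_distrib]
          refine Finset.sum_congr rfl fun i _ => ?_
          ring
        rw [hstep]
        rcases (hDnn j).eq_or_lt with h | h
        · have hc0 : c j = 0 := by
            have := hcabs j
            rw [← h] at this
            exact abs_eq_zero.mp (le_antisymm this (abs_nonneg _))
          rw [hc0]; simp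
        · rw [div_mul_cancel₀ _ (ne_of_gt h)]; ring
      obtain ⟨AfW, hAfW⟩ : ∃ AfW : Matrix (Fin m) (Fin n) ℝ,
          AfW = fun i j => Afc i j + AfΔ i j := ⟨_, rfl⟩
      obtain ⟨bfW, hbfW⟩ : ∃ bfW : Fin m → ℝ, bfW = fun i => bfc i - bfΔ i := ⟨_, rfl⟩
      obtain ⟨Ae, hAe, be, hbe, x, y, hineq, hx⟩ :=
        H AfW
          (fun i j => by
            have heq : AfW i j - Afc i j = AfΔ i j := by simp only [hAfW]; ring
            rw [heq, abs_of_nonneg (hAfΔ i j)])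
          Bf hBfmem
          bfW
          (fun i => by
            have heq : bfW i - bfc i = -(bfΔ i) := by simp only [hbfW]; ring
            rw [heq, abs_neg, abs_of_nonneg (hbfΔ i)])
      obtain ⟨M, hMdef⟩ : ∃ M : Matrix (Fin m) (Fin n) ℝ, M = AfW + Ae := ⟨_, rfl⟩
      rw [← hMdef] at hineq
      have expand : ∑ i, p i * ((M.mulVec x) i + (Bf.mulVec y) i)
          = (∑ j, (∑ i, p i * M i j) * x j) + (∑ j, (∑ i, p i * Bf i j) * y j) := by
        simp only [Matrix.mulVec, dotProduct, mul_add, Finset.sum_add_distrib,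
          Finset.mul_sum]
        congr 1
        · rw [Finset.sum_comm]
          refine Finset.sum_congr rfl fun j _ => ?_
          rw [Finset.sum_mul]
          exact Finset.sum_congr rfl fun i _ => by ring
        · rw [Finset.sum_comm]
          refine Finset.sum_congr rfl fun j _ => ?_
          rw [Finset.sum_mul]
          exact Finset.sum_congr rfl fun i _ => by ring
      have key : 0 ≤ ∑ i, p i * ((M.mulVec x) i + (Bf.mulVec y) i) := by
        rw [expand]
        have z2 : ∑ j, (∑ i, p i * Bf i j) * y j = 0 := by
          refine Finset.sum_eq_zero fun j _ => ?_
          rw [hBcol j, zero_mul]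
        rw [z2, add_zero]
        refine Finset.sum_nonneg fun j _ => mul_nonneg ?_ (hx j)
        have hAcol : 0 ≤ ∑ i, p i * Astar i j := by
          have h := hp (Sum.inl (Sum.inl j))
          have e : p ⬝ᵥ V (Sum.inl (Sum.inl j)) = ∑ i, p i * Astar i j := by
            rw [hV]
            simp [dotProduct]
          rwa [e] at h
        have hmono : ∑ i, p i * Astar i j ≤ ∑ i, p i * M i j := by
          refine Finset.sum_le_sum fun i _ => ?_
          refine mul_le_mul_of_nonneg_left ?_ (hpnn i)
          have hle := (abs_le.mp (hAe i j)).1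
          simp only [hMdef, hAstar, Matrix.add_apply]
          simp only [hAfW]
          linarith
        linarith
      have upper : ∑ i, p i * ((M.mulVec x) i + (Bf.mulVec y) i)
          ≤ ∑ i, p i * bstar i := by
        refine Finset.sum_le_sum fun i _ => ?_
        refine mul_le_mul_of_nonneg_left ?_ (hpnn i)
        have hi := hineq i
        have hbe2 := (abs_le.mp (hbe i)).2
        have hb3 : bfW i = bfc i - bfΔ i := by simp only [hbfW]
        have hb4 : bstar i = bfc i - bfΔ i + bec i + beΔ i := by simp only [hbstar]
        linarith
      have hrhs : ∑ i, p i * bstar i < 0 := by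
        simpa [dotProduct] using hpb
      linarith
  · rintro ⟨x, y, h⟩ Af hAf Bf hBf bf hbf
    obtain ⟨Ae, hAe, be, hbe, hineq, hx⟩ := h Af hAf Bf hBf bf hbf
    exact ⟨Ae, hAe, be, hbe, x, y, hineq, hx⟩
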